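/- arXiv:1803.02853 — 3 statements merged into one kernel-verified Lean document; each statement's English description precedes it below -/
import Mathlib

section
/- For every m ≥ 2 and nonzero a ∈ ℂ, the power series equation t^m + a·t·y(t) + b·y(t)² = 0 with y(0) = 0 has a formal power series solution y ∈ ℂ[[t]] with v(y) = m - 1. -/
open PowerSeries

noncomputable def cf (a b : ℂ) (n : ℕ) : ℕ → ℂ
  | 0 => 0
  | (k+1) => -a⁻¹ * ((if k+1 = n then (1:ℂ) else 0) +
      b * ∑ i ∈ (Finset.Ioo 0 (k+1)).attach, cf a b n i.1 * cf a b n (k+1-i.1))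
  decreasing_by
  · exact (Finset.mem_Ioo.mp i.2).2
  · have := (Finset.mem_Ioo.mp i.2).1; omega

lemma cf_eq_before (a b : ℂ) (n : ℕ) : ∀ k, k < n → cf a b n k = 0 := by
  intro k
  induction k using Nat.strong_induction_on with
  | _ k ih =>
    intro hk
    match k with
    | 0 => simp [cf]
    | (j+1) =>
      rw [cf, if_neg (by omega)]
      have : ∀ i ∈ (Finset.Ioo 0 (j+1)).attach,
          cf a b n i.1 * cf a b n (j+1-i.1) = 0 := by
        intro i _
        have hi := Finset.mem_Ioo.mp i.2
        rw [ih i.1 (by omega) (by omega), zero_mul]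
      rw [Finset.sum_congr rfl this, Finset.sum_const_zero]
      ring

lemma cf_at (a b : ℂ) (n : ℕ) (hn : 1 ≤ n) : cf a b n n = -a⁻¹ := by
  match n, hn with
  | (j+1), _ =>
    rw [cf, if_pos rfl]
    have : ∀ i ∈ (Finset.Ioo 0 (j+1)).attach,
        cf a b (j+1) i.1 * cf a b (j+1) (j+1-i.1) = 0 := by
      intro i _
      have hi := Finset.mem_Ioo.mp i.2
      rw [cf_eq_before a b (j+1) i.1 (by omega), zero_mul]
    rw [Finset.sum_congr rfl this, Finset.sum_const_zero]
    ring

lemma cf_key (a : ℂ) (ha : a ≠ 0) (b : ℂ) (n : ℕ) (hn : 1 ≤ n) :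
    C a * mk (cf a b n) + C b * (mk (cf a b n))^2 + X^n = 0 := by
  ext k
  rw [map_zero, map_add, map_add, coeff_C_mul, coeff_C_mul, sq, coeff_mul, coeff_X_pow,
    coeff_mk]
  simp only [coeff_mk]
  match k with
  | 0 =>
    rw [if_neg (by omega)]
    simp [cf]
  | (j+1) =>
    have hrec : cf a b n (j+1) = -a⁻¹ * ((if j+1 = n then (1:ℂ) else 0) +
        b * ∑ i ∈ (Finset.Ioo 0 (j+1)).attach, cf a b n i.1 * cf a b n (j+1-i.1)) := by
      rw [cf]
    have hsum : ∑ p ∈ Finset.HasAntidiagonal.antidiagonal (j+1), cf a b n p.1 * cf a b n p.2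
        = ∑ i ∈ (Finset.Ioo 0 (j+1)).attach, cf a b n i.1 * cf a b n (j+1-i.1) := by
      rw [Finset.Nat.sum_antidiagonal_eq_sum_range_succ (fun x y => cf a b n x * cf a b n y),
        Finset.sum_attach (Finset.Ioo 0 (j+1)) (fun i => cf a b n i * cf a b n (j+1-i))]
      symm
      apply Finset.sum_subset
      · intro i hi
        have := Finset.mem_Ioo.mp hi
        exact Finset.mem_range.mpr (by omega)
      · intro i hi hni
        have h1 := Finset.mem_range.mp hi
        have h2 : ¬(0 < i ∧ i < j+1) := by simpa [Finset.mem_Ioo] using hni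
        rcases (by omega : i = 0 ∨ i = j+1) with h | h
        · subst h; simp [cf]
        · subst h; simp [cf]
    rw [hsum, hrec]
    field_simp
    ring

lemma z_exists (a : ℂ) (ha : a ≠ 0) (b : ℂ) (n : ℕ) :
    ∃ z : ℂ⟦X⟧, C a * z + C b * z ^ 2 + X ^ n = 0 ∧ z.order = (n : ℕ) := by
  rcases Nat.eq_zero_or_pos n with hn | hn
  · subst hn
    have hroot : ∃ r : ℂ, b * r^2 + a * r + 1 = 0 := by
      set p : Polynomial ℂ :=
        Polynomial.C b * Polynomial.X^2 + Polynomial.C a * Polynomial.X + 1 with hp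
      have hc : p.coeff 1 = a := by simp [hp, Polynomial.coeff_one]
      have hdeg : 0 < p.degree := by
        have := Polynomial.le_degree_of_ne_zero (n := 1) (p := p) (by rw [hc]; exact ha)
        exact lt_of_lt_of_le (by norm_num) this
      obtain ⟨r, hr⟩ := Complex.exists_root hdeg
      refine ⟨r, ?_⟩
      have : p.eval r = 0 := hr
      simpa [hp] using this
    obtain ⟨r, hr⟩ := hroot
    have hr0 : r ≠ 0 := by
      intro h; rw [h] at hr; simp at hr
    refine ⟨C r, ?_, ?_⟩
    · have h0 : (X : ℂ⟦X⟧)^0 = C 1 := by simp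
      rw [h0, ← map_pow, ← map_mul, ← map_mul, ← map_add, ← map_add,
        show a * r + b * r^2 + 1 = b * r^2 + a * r + 1 by ring, hr, map_zero]
    · rw [order_eq_nat]
      constructor
      · simpa using hr0
      · intro i hi; omega
  · refine ⟨mk (cf a b n), cf_key a ha b n hn, ?_⟩
    rw [order_eq_nat]
    constructor
    · rw [coeff_mk, cf_at a b n hn]
      simp [ha]
    · intro i hi
      rw [coeff_mk, cf_eq_before a b n i hi]

/-- For every `m ≥ 2`, nonzero `a : ℂ` and arbitrary `b : ℂ`, the equation
`t^m + a·t·y(t) + b·y(t)² = 0` with `y(0) = 0` has a formal power series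
solution `y ∈ ℂ[[t]]` with `v(y) = m - 1`. -/
theorem stmt_5 (m : ℕ) (hm : 2 ≤ m) (a : ℂ) (ha : a ≠ 0) (b : ℂ) :
    ∃ y : ℂ⟦X⟧, constantCoeff y = 0 ∧
      (X : ℂ⟦X⟧) ^ m + C a * X * y + C b * y ^ 2 = 0 ∧
      y.order = (m - 1 : ℕ) := by
  obtain ⟨z, hz, hzo⟩ := z_exists a ha b (m - 2)
  refine ⟨X * z, ?_, ?_, ?_⟩
  · simp
  · have hXm : (X : ℂ⟦X⟧) ^ m = X ^ 2 * X ^ (m - 2) := by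
      rw [← pow_add]; congr 1; omega
    calc (X : ℂ⟦X⟧) ^ m + C a * X * (X * z) + C b * (X * z) ^ 2
        = X ^ 2 * (C a * z + C b * z ^ 2 + X ^ (m - 2)) := by rw [hXm]; ring
      _ = 0 := by rw [hz, mul_zero]
  · rw [order_mul, order_X, hzo]
    have h1 : m - 1 = 1 + (m - 2) := by omega
    rw [h1]
    push_cast
    ring
end

section
/- For every nonconstant formal power series curve γ = (γ₁, γ₂, γ₃): ℂ → ℂ³ with γ(0) = 0, min(v((z₁³ − z₃z₂) ∘ γ), v(z₂² ∘ γ), v(z₃ ∘ γ)) ≤ 3 · v(γ), where v(γ) = min(v(γ₁), v(γ₂), v(γ₃)). That is, the 1-type of the ideal (z₁³ − z₃z₂, z₂², z₃) in three variables is at most 3. -/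
open PowerSeries

lemma order_neg' (f : ℂ⟦X⟧) : (-f).order = f.order := by
  have h : ∀ g : ℂ⟦X⟧, g.order ≤ (-g).order := fun g =>
    PowerSeries.le_order _ _ (fun i hi => by
      simp [PowerSeries.coeff_of_lt_order i hi])
  refine le_antisymm ?_ (h f)
  simpa using h (-f)

/-- For every nonconstant formal power series curve `γ = (γ₁, γ₂, γ₃)` with
`γ(0) = 0`, `min (v(γ₁³ - γ₃γ₂)) (v(γ₂²)) (v(γ₃)) ≤ 3 · v(γ)` where
`v(γ) = min (v(γ₁)) (v(γ₂)) (v(γ₃))`: the 1-type of the ideal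
`(z₁³ - z₃z₂, z₂², z₃)` is at most 3. -/
theorem stmt_6 (γ₁ γ₂ γ₃ : ℂ⟦X⟧)
    (h₁ : constantCoeff γ₁ = 0) (h₂ : constantCoeff γ₂ = 0)
    (h₃ : constantCoeff γ₃ = 0) (hnc : ¬(γ₁ = 0 ∧ γ₂ = 0 ∧ γ₃ = 0)) :
    min (min (γ₁ ^ 3 - γ₃ * γ₂).order (γ₂ ^ 2).order) γ₃.order ≤
      3 * min (min γ₁.order γ₂.order) γ₃.order := by
  set m := min (min γ₁.order γ₂.order) γ₃.order with hm
  have hm3m : m ≤ 3 * m := by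
    calc m = 1 * m := (one_mul m).symm
    _ ≤ 3 * m := mul_le_mul_left (by norm_num) m
  have h2m3m : 2 * m ≤ 3 * m := mul_le_mul_left (by norm_num) m
  by_cases hA : γ₃.order ≤ 3 * m
  · exact le_trans (min_le_right _ _) hA
  push_neg at hA
  have hp2 : (γ₂ ^ 2).order = 2 * γ₂.order := by
    rw [sq, order_mul, two_mul]
  by_cases hB : (γ₂ ^ 2).order ≤ 3 * m
  · exact le_trans ((min_le_left _ _).trans (min_le_right _ _)) hB
  push_neg at hB
  rw [hp2] at hB
  -- m < γ₂.order and m < γ₃.order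
  have hm2 : m < γ₂.order := by
    by_contra h
    push_neg at h
    exact absurd hB (not_lt.2 ((mul_le_mul_right h 2).trans h2m3m))
  have hm3 : m < γ₃.order := lt_of_le_of_lt hm3m hA
  -- hence m = γ₁.order
  have hm1 : m = γ₁.order := by
    rcases min_cases (min γ₁.order γ₂.order) γ₃.order with ⟨he, _⟩ | ⟨he, _⟩
    · rw [hm, he]
      rcases min_cases γ₁.order γ₂.order with ⟨he2, _⟩ | ⟨he2, _⟩
      · exact he2
      · exact absurd hm2 (by rw [hm, he, he2]; exact lt_irrefl _)
    · exact absurd hm3 (by rw [hm, he]; exact lt_irrefl _)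
  -- order of γ₁ ^ 3 is 3 * m
  have hpow : (γ₁ ^ 3).order = 3 * m := by
    have : γ₁ ^ 3 = γ₁ * γ₁ * γ₁ := by ring
    rw [this, order_mul, order_mul, ← hm1]
    ring
  -- order of γ₃ * γ₂ is larger
  have hmul : 3 * m < (γ₃ * γ₂).order := by
    rw [order_mul]
    exact lt_of_lt_of_le hA le_self_add
  have hne : (γ₁ ^ 3).order ≠ (-(γ₃ * γ₂)).order := by
    rw [hpow, order_neg']
    exact ne_of_lt hmul
  have hsub : (γ₁ ^ 3 - γ₃ * γ₂).order = 3 * m := by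
    rw [sub_eq_add_neg, order_add_of_order_ne _ _ hne, hpow, order_neg']
    exact min_eq_left hmul.le
  calc min (min (γ₁ ^ 3 - γ₃ * γ₂).order (γ₂ ^ 2).order) γ₃.order
      ≤ (γ₁ ^ 3 - γ₃ * γ₂).order := (min_le_left _ _).trans (min_le_left _ _)
    _ = 3 * m := hsub
end

section
/- For the ideal I = (z₁³ + a z₁ z₂, z₂²) in ℂ[[z₁, z₂]] with a = 0: for every nonconstant power series curve γ = (γ₁, γ₂) with γ(0) = 0, min(v(γ₁³), v(γ₂²)) ≤ 3·min(v(γ₁), v(γ₂)), and there is a curve achieving equality; hence the 1-type of (z₁³, z₂²) is exactly 3, while for a ≠ 0 the curve γ(t) = (t, −t²/a) shows the 1-type of (z₁³ + a z₁ z₂, z₂²) is at least 4. -/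
open PowerSeries

lemma order_pow_aux (γ : ℂ⟦X⟧) (n : ℕ) : (γ ^ n).order = n * γ.order := by
  induction n with
  | zero => simp [order_one]
  | succ n ih =>
    rw [pow_succ, order_mul, ih, Nat.cast_add, Nat.cast_one]
    ring

/-- Combined statement: (i) for every nonconstant power series curve
`γ = (γ₁, γ₂)` with `γ(0) = 0`, `min (v(γ₁³)) (v(γ₂²)) ≤ 3 · min (v(γ₁)) (v(γ₂))`;
(ii) there is such a curve achieving equality, so the 1-type of `(z₁³, z₂²)` is
exactly 3; (iii) for every `a ≠ 0`, the curve `γ(t) = (t, -t²/a)` shows the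
1-type of `(z₁³ + a z₁ z₂, z₂²)` is at least 4. -/
theorem stmt_19 :
    (∀ γ₁ γ₂ : ℂ⟦X⟧, constantCoeff γ₁ = 0 → constantCoeff γ₂ = 0 →
      ¬(γ₁ = 0 ∧ γ₂ = 0) →
      min (γ₁ ^ 3).order (γ₂ ^ 2).order ≤ 3 * min γ₁.order γ₂.order) ∧
    (∃ γ₁ γ₂ : ℂ⟦X⟧, constantCoeff γ₁ = 0 ∧ constantCoeff γ₂ = 0 ∧
      ¬(γ₁ = 0 ∧ γ₂ = 0) ∧
      min (γ₁ ^ 3).order (γ₂ ^ 2).order = 3 * min γ₁.order γ₂.order) ∧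
    (∀ a : ℂ, a ≠ 0 →
      4 * min (X : ℂ⟦X⟧).order (C (-a⁻¹) * (X : ℂ⟦X⟧) ^ 2).order ≤
        min ((X : ℂ⟦X⟧) ^ 3 + C a * X * (C (-a⁻¹) * X ^ 2)).order
          ((C (-a⁻¹) * (X : ℂ⟦X⟧) ^ 2) ^ 2).order) := by
  refine ⟨?_, ?_, ?_⟩
  · intro γ₁ γ₂ _ _ _
    rw [order_pow_aux, order_pow_aux]
    rcases le_total γ₁.order γ₂.order with h | h
    · calc min ((3 : ℕ) * γ₁.order) ((2 : ℕ) * γ₂.order) ≤ (3 : ℕ) * γ₁.order :=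
            min_le_left _ _
        _ = 3 * min γ₁.order γ₂.order := by rw [min_eq_left h]; norm_num
    · calc min ((3 : ℕ) * γ₁.order) ((2 : ℕ) * γ₂.order) ≤ (2 : ℕ) * γ₂.order :=
            min_le_right _ _
        _ ≤ (3 : ℕ) * γ₂.order := by
            apply mul_le_mul_left
            norm_num
        _ = 3 * min γ₁.order γ₂.order := by rw [min_eq_right h]; norm_num
  · refine ⟨X ^ 2, X ^ 3, by simp, by simp, ?_, ?_⟩
    · rintro ⟨h, -⟩
      exact X_ne_zero (pow_eq_zero_iff (n := 2) (by norm_num) |>.mp h)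
    · simp only [← pow_mul, order_X_pow]
      decide
  · intro a ha
    have h0 : (X : ℂ⟦X⟧) ^ 3 + C a * X * (C (-a⁻¹) * X ^ 2) = 0 := by
      have : (C a) * (C (-a⁻¹)) = C (-1) := by
        rw [← map_mul]; congr 1; field_simp
      ring_nf
      rw [mul_assoc, this, map_neg, map_one]
      ring
    rw [h0]
    have hC : (C (-a⁻¹)).order = 0 := by
      rw [show (C (-a⁻¹)) = monomial 0 (-a⁻¹) from by simp,
        order_monomial_of_ne_zero 0 _ (by simp [ha])]
      rfl
    have h2 : (C (-a⁻¹) * (X : ℂ⟦X⟧) ^ 2).order = 2 := by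
      rw [order_mul, hC, order_X_pow]; simp
    rw [order_zero, order_X, h2, sq, order_mul, h2]
    decide
end
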